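/- Let A = {a_0 < ... < a_{k-1}} ⊆ C_n. If α ∈ σ^{(n)}(A) is a_0-nilpotent (some power of α is the constant map ā_0), then α(i) < i for all i ≥ a_0 + 1; in particular α(a_1) = a_0 and α(j) = a_0 for all j ≤ a_1. -/
import Mathlib

/-- If `α ∈ σ^{(n)}(A)` is `a0`-nilpotent (some positive iterate is the constant
map `ā0`), where `a0 < a1` are the two least elements of `A`, then `α i < i` for all
`i > a0`, `α a1 = a0`, and `α j = a0` for all `j ≤ a1`. -/
theorem stmt7 (n : ℕ) (A : Set (Fin n)) (a0 a1 : Fin n) (ha0 : a0 ∈ A) (ha1 : a1 ∈ A)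
    (hlt : a0 < a1) (hleast : ∀ x ∈ A, a0 ≤ x) (hsecond : ∀ x ∈ A, x = a0 ∨ a1 ≤ x)
    (α : Fin n → Fin n) (hm : Monotone α) (hr : Set.range α ⊆ A)
    (hnil : ∃ m : ℕ, 1 ≤ m ∧ α^[m] = fun _ => a0) :
    (∀ i : Fin n, a0 < i → α i < i) ∧ α a1 = a0 ∧ (∀ j : Fin n, j ≤ a1 → α j = a0) := by
  obtain ⟨m, hm1, hnil⟩ := hnil
  have key : ∀ i : Fin n, i ≤ α i → ∀ k, i ≤ α^[k] i := by
    intro i hi k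
    induction k with
    | zero => simp
    | succ k ih =>
      calc i ≤ α^[k] i := ih
        _ ≤ α^[k] (α i) := (hm.iterate k) hi
        _ = α^[k+1] i := (Function.iterate_succ_apply α k i).symm
  have main : ∀ i : Fin n, a0 < i → α i < i := by
    intro i hi
    by_contra h
    push_neg at h
    have := key i h m
    rw [hnil] at this
    exact absurd (lt_of_lt_of_le hi this) (lt_irrefl a0)
  have h2 : α a1 = a0 := by
    have hmem : α a1 ∈ A := hr ⟨a1, rfl⟩
    rcases hsecond _ hmem with h | h
    · exact h
    · exact absurd (main a1 hlt) (not_lt.2 h)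
  refine ⟨main, h2, fun j hj => ?_⟩
  have h3 : α j ≤ a0 := h2 ▸ hm hj
  exact le_antisymm h3 (hleast _ (hr ⟨j, rfl⟩))
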